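/- Let G be a finite simple graph with vertex clique-partition π = {W_1,…,W_d}, and let G^π be the clique-whiskered graph with added vertex set W. Then every maximal independent vertex set of G^π has cardinality exactly d; that is, the graph G^π is unmixed (the independence complex Ind G^π is pure of dimension d − 1). -/
import Mathlib


namespace Paper

variable {V : Type*}

/-- `S` is an independent vertex set of the graph `H` (equivalently, of any induced
subgraph of `H` containing `S`): its vertices are pairwise non-adjacent. -/
def IndepOn (H : SimpleGraph V) (S : Set V) : Prop :=
  ∀ x ∈ S, ∀ y ∈ S, ¬ H.Adj x y

/-- `S` is a maximal independent vertex set of the graph `H`. -/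
def MaxIndep (H : SimpleGraph V) (S : Set V) : Prop :=
  IndepOn H S ∧ ∀ T : Set V, IndepOn H T → S ⊆ T → T = S

/-- The data exhibiting the graph `H` (on its full vertex type) as the
clique-whiskered graph `G^π` over the base graph `G` (the induced subgraph of `H` on
`Vg`), built from a vertex clique-partition `π = {W_1, …, W_d}` of `G` by adding `d`
new vertices `s_1', …, s_d'`, where `s_i'` is adjacent exactly to the vertices of
`W i`.  The set of added vertices is `W = Set.range sV`. -/
structure CliqueWhiskered (H : SimpleGraph V) (d : ℕ) where
  /-- the vertex set of the base graph `G`; the edges of `G` are the edges of `H`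
  between vertices of `Vg`, i.e. `G` is the induced subgraph of `H` on `Vg`. -/
  Vg : Set V
  /-- the vertex clique-partition `π = {W_1, …, W_d}` of `G` -/
  W : Fin d → Set V
  /-- the added whisker vertices `s_1', …, s_d'` -/
  sV : Fin d → V
  W_ne : ∀ i, (W i).Nonempty
  W_sub : ∀ i, W i ⊆ Vg
  W_disj : ∀ i j, i ≠ j → Disjoint (W i) (W j)
  W_cover : Vg ⊆ ⋃ i, W i
  W_clique : ∀ i, ∀ x ∈ W i, ∀ y ∈ W i, x ≠ y → H.Adj x y
  s_notin : ∀ i, sV i ∉ Vg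
  s_inj : Function.Injective sV
  /-- the vertex set of `G^π` is `V(G)` together with the new vertices -/
  total : Set.univ = Vg ∪ Set.range sV
  /-- `s_i'` is adjacent exactly to the vertices of `W i` -/
  s_adj : ∀ i, ∀ w : V, H.Adj (sV i) w ↔ w ∈ W i

/-- **Theorem.** Every maximal independent vertex set of the clique-whiskered graph
`G^π` has cardinality exactly `d`; that is, `G^π` is unmixed (the independence complex
`Ind G^π` is pure of dimension `d - 1`). -/
theorem cliqueWhiskered_unmixed [Fintype V]
    (H : SimpleGraph V) (d : ℕ) (M : CliqueWhiskered H d)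
    (F : Set V) (hF : MaxIndep H F) :
    F.ncard = d := by
  -- B i = W i ∪ {sV i}
  set B : Fin d → Set V := fun i => insert (M.sV i) (M.W i) with hB
  have key : ∀ i, ∃! v, v ∈ F ∩ B i := by
    intro i
    have hex : ∃ v, v ∈ F ∩ B i := by
      by_contra hne
      push_neg at hne
      have hWF : ∀ w ∈ M.W i, w ∉ F := fun w hw hwF =>
        hne w ⟨hwF, Or.inr hw⟩
      have hindep : IndepOn H (insert (M.sV i) F) := by
        intro x hx y hy hadj
        rcases hx with rfl | hxF
        · rcases hy with rfl | hyF
          · exact H.irrefl hadj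
          · exact hWF y ((M.s_adj i y).mp hadj) hyF
        · rcases hy with rfl | hyF
          · exact hWF x ((M.s_adj i x).mp hadj.symm) hxF
          · exact hF.1 x hxF y hyF hadj
      have := hF.2 _ hindep (Set.subset_insert _ _)
      have hsF : M.sV i ∈ F := this ▸ Set.mem_insert _ _
      exact hne _ ⟨hsF, Or.inl rfl⟩
    obtain ⟨v, hv⟩ := hex
    refine ⟨v, hv, ?_⟩
    intro u hu
    by_contra hne
    rcases hu.2 with hu2 | hu2 <;> rcases hv.2 with hv2 | hv2
    · exact hne (hu2.trans hv2.symm)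
    · exact hF.1 u hu.1 v hv.1 (hu2 ▸ (M.s_adj i v).mpr hv2)
    · exact hF.1 u hu.1 v hv.1 (hv2 ▸ ((M.s_adj i u).mpr hu2).symm)
    · exact hF.1 u hu.1 v hv.1 (M.W_clique i u hu2 v hv2 hne)
  choose g hg hguniq using key
  -- B's are pairwise disjoint
  have hBdisj : ∀ i j, i ≠ j → ∀ v, v ∈ B i → v ∈ B j → False := by
    intro i j hij v hvi hvj
    rcases hvi with rfl | hvi <;> rcases hvj with h2 | hvj
    · exact hij (M.s_inj h2)
    · exact M.s_notin i (M.W_sub j hvj)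
    · exact M.s_notin j (h2 ▸ M.W_sub i hvi)
    · exact (M.W_disj i j hij).ne_of_mem hvi hvj rfl
  have hginj : Function.Injective g := by
    intro i j hij
    by_contra hne
    exact hBdisj i j hne (g i) (hg i).2 (hij ▸ (hg j).2)
  have hFeq : F = Set.range g := by
    ext v
    constructor
    · intro hvF
      have : v ∈ (Set.univ : Set V) := Set.mem_univ v
      rw [M.total] at this
      rcases this with hvg | ⟨i, rfl⟩
      · obtain ⟨_, ⟨i, rfl⟩, hvi⟩ := M.W_cover hvg
        exact ⟨i, (hguniq i v ⟨hvF, Or.inr hvi⟩).symm⟩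
      · exact ⟨i, (hguniq i _ ⟨hvF, Or.inl rfl⟩).symm⟩
    · rintro ⟨i, rfl⟩
      exact (hg i).1
  rw [hFeq, ← Set.image_univ, Set.ncard_image_of_injective _ hginj,
    Set.ncard_univ, Nat.card_eq_fintype_card, Fintype.card_fin]

end Paper
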